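/- Let P and Q be probability measures on a finite set with Q(x) > 0 for all x, min_x Q(x) ≥ 1/m, and max_x P(x)/Q(x) ≤ m for some m > 1. Then χ²(P‖Q) ≤ ((m-1)²/(m ln m - m + 1)) · D(P‖Q), where D uses natural logarithm. -/

import Mathlib

open Finset

private lemma hasDerivAt_of_eq {f : ℝ → ℝ} {d d' x : ℝ} (h : HasDerivAt f d x)
    (he : d = d') : HasDerivAt f d' x := he ▸ h

private lemma mono_aux {f f' : ℝ → ℝ} {a b : ℝ} (hab : a ≤ b)
    (hf : ∀ x ∈ Set.Icc a b, HasDerivAt f (f' x) x)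
    (h0 : ∀ x ∈ Set.Icc a b, 0 ≤ f' x) : f a ≤ f b := by
  have hm : MonotoneOn f (Set.Icc a b) :=
    monotoneOn_of_deriv_nonneg (convex_Icc a b)
      (fun x hx => (hf x hx).continuousAt.continuousWithinAt)
      (fun x hx => (hf x (interior_subset hx)).differentiableAt.differentiableWithinAt)
      (fun x hx => by rw [(hf x (interior_subset hx)).deriv]; exact h0 x (interior_subset hx))
  exact hm (Set.left_mem_Icc.2 hab) (Set.right_mem_Icc.2 hab) hab

private lemma log_ge {t : ℝ} (ht : 0 < t) : 1 - 1/t ≤ Real.log t := by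
  have h := Real.log_le_sub_one_of_pos (show (0:ℝ) < 1/t by positivity)
  rw [one_div, Real.log_inv] at h
  rw [one_div]
  linarith

private lemma fpos {m : ℝ} (hm : 1 < m) : 0 < m * Real.log m - m + 1 := by
  have h := Real.log_lt_sub_one_of_pos (show (0:ℝ) < 1/m by positivity)
    (by intro hc; rw [div_eq_one_iff_eq (by linarith)] at hc; linarith)
  rw [one_div, Real.log_inv] at h
  have hm0 : (0:ℝ) < m := by linarith
  have hmm : m * m⁻¹ = 1 := mul_inv_cancel₀ hm0.ne'
  nlinarith [mul_lt_mul_of_pos_left h hm0]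

private lemma lemB {t : ℝ} (ht : 1 ≤ t) : 2*(t-1) ≤ (t+1) * Real.log t := by
  have h := mono_aux (f := fun s => (s+1)*Real.log s - 2*(s-1))
      (f' := fun s => Real.log s + (s+1) * s⁻¹ - 2) ht
    (fun x hx => by
      have hx0 : (0:ℝ) < x := lt_of_lt_of_le one_pos hx.1
      exact hasDerivAt_of_eq
        ((((hasDerivAt_id x).add_const 1).mul (Real.hasDerivAt_log hx0.ne')).sub
          (((hasDerivAt_id x).sub_const 1).const_mul 2)) (by simp only [id_eq]; ring))
    (fun x hx => by
      have hx0 : (0:ℝ) < x := lt_of_lt_of_le one_pos hx.1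
      have hl := log_ge hx0
      have hxx : x * x⁻¹ = 1 := mul_inv_cancel₀ hx0.ne'
      have h1 : 1/x = x⁻¹ := one_div x
      rw [h1] at hl
      nlinarith [hx.1])
  simp only [Real.log_one] at h
  linarith [h]

private lemma lemC {t : ℝ} (ht : 1 ≤ t) : (t-1)^2 * t⁻¹ ≤ 2*(t*Real.log t - t + 1) := by
  have h := mono_aux (f := fun s => 2*(s*Real.log s - s + 1) - (s-1)^2 * s⁻¹)
      (f' := fun s => 2*Real.log s - 1 + (s⁻¹)^2) ht
    (fun x hx => by
      have hx0 : (0:ℝ) < x := lt_of_lt_of_le one_pos hx.1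
      refine hasDerivAt_of_eq
        (((((Real.hasDerivAt_mul_log hx0.ne').sub (hasDerivAt_id x)).add_const 1).const_mul 2).sub
          ((((hasDerivAt_id x).sub_const 1).pow 2).mul (hasDerivAt_inv hx0.ne'))) ?_
      simp only [id_eq, Pi.pow_apply]
      field_simp
      ring)
    (fun x hx => by
      have hx0 : (0:ℝ) < x := lt_of_lt_of_le one_pos hx.1
      have hl := log_ge hx0
      have hxx : x * x⁻¹ = 1 := mul_inv_cancel₀ hx0.ne'
      have h1 : 1/x = x⁻¹ := one_div x
      rw [h1] at hl
      have hinv1 : x⁻¹ ≤ 1 := by nlinarith [hx.1]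
      have hinv0 : 0 ≤ x⁻¹ := inv_nonneg.2 hx0.le
      nlinarith [hx.1])
  simp only [Real.log_one] at h
  have : (1-1:ℝ)^2 * (1:ℝ)⁻¹ = 0 := by norm_num
  nlinarith [h]

private lemma lemD {m : ℝ} (hm : 1 ≤ m) : 2*(m*Real.log m - m + 1) ≤ (m-1)^2 := by
  have h := mono_aux (f := fun s => (s-1)^2 - 2*(s*Real.log s - s + 1))
      (f' := fun s => 2*(s-1) - 2*Real.log s) hm
    (fun x hx => by
      have hx0 : (0:ℝ) < x := lt_of_lt_of_le one_pos hx.1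
      refine hasDerivAt_of_eq
        ((((hasDerivAt_id x).sub_const 1).pow 2).sub
          ((((Real.hasDerivAt_mul_log hx0.ne').sub (hasDerivAt_id x)).add_const 1).const_mul 2)) ?_
      simp only [id_eq]
      ring)
    (fun x hx => by
      have hx0 : (0:ℝ) < x := lt_of_lt_of_le one_pos hx.1
      have := Real.log_le_sub_one_of_pos hx0
      linarith)
  simp only [Real.log_one] at h
  nlinarith [h]

private lemma lemE {t : ℝ} (ht0 : 0 ≤ t) (ht1 : t ≤ 1) :
    (t-1)^2/2 ≤ t*Real.log t - t + 1 := by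
  rcases eq_or_lt_of_le ht0 with h0 | h0
  · simp [← h0, Real.log_zero]; norm_num
  · have h := mono_aux (f := fun s => (s-1)^2/2 - (s*Real.log s - s + 1))
        (f' := fun s => (s-1) - Real.log s) ht1
      (fun x hx => by
        have hx0 : (0:ℝ) < x := lt_of_lt_of_le h0 hx.1
        refine hasDerivAt_of_eq
          (((((hasDerivAt_id x).sub_const 1).pow 2).div_const 2).sub
            (((Real.hasDerivAt_mul_log hx0.ne').sub (hasDerivAt_id x)).add_const 1)) ?_
        simp only [id_eq]
        ring)
      (fun x hx => by
        have hx0 : (0:ℝ) < x := lt_of_lt_of_le h0 hx.1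
        have := Real.log_le_sub_one_of_pos hx0
        linarith)
    simp only [Real.log_one] at h
    nlinarith [h]

private lemma key (m t : ℝ) (hm : 1 < m) (ht0 : 0 ≤ t) (htm : t ≤ m) :
    (t-1)^2 * (m * Real.log m - m + 1) ≤ (m-1)^2 * (t * Real.log t - t + 1) := by
  rcases le_or_gt t 1 with h1 | h1
  · have hE := lemE ht0 h1
    have hD := lemD hm.le
    nlinarith [sq_nonneg (t-1), sq_nonneg (m-1),
      mul_le_mul_of_nonneg_left hD (sq_nonneg (t-1)),
      mul_le_mul_of_nonneg_left hE (sq_nonneg (m-1))]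
  · have ht1 : 1 ≤ t := h1.le
    have ht0' : (0:ℝ) < t := lt_of_lt_of_le one_pos ht1
    set A := t * Real.log t - t + 1 with hA
    set Bc := (t-1)^2 with hBc
    have hCt := lemC ht1
    have hBt := lemB ht1
    have hAnn : 0 ≤ A := by
      have : 0 ≤ (t-1)^2 * t⁻¹ := by positivity
      linarith
    -- η(s) = 2*(s-1)*A - log s * Bc ≥ 0 for s ∈ [t, m]
    have heta : ∀ s ∈ Set.Icc t m, 0 ≤ 2*(s-1)*A - Real.log s * Bc := by
      intro s hs
      have h := mono_aux (f := fun r => 2*(r-1)*A - Real.log r * Bc)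
          (f' := fun r => 2*A - r⁻¹ * Bc) hs.1
        (fun x hx => by
          have hx0 : (0:ℝ) < x := lt_of_lt_of_le ht0' hx.1
          refine hasDerivAt_of_eq
            (((((hasDerivAt_id x).sub_const 1).const_mul 2).mul_const A).sub
              ((Real.hasDerivAt_log hx0.ne').mul_const Bc)) ?_
          ring)
        (fun x hx => by
          have hx0 : (0:ℝ) < x := lt_of_lt_of_le ht0' hx.1
          have hxinv : x⁻¹ ≤ t⁻¹ := inv_anti₀ ht0' hx.1
          have hBnn : 0 ≤ Bc := sq_nonneg _
          have : x⁻¹ * Bc ≤ t⁻¹ * Bc := mul_le_mul_of_nonneg_right hxinv hBnn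
          have h2 : t⁻¹ * Bc ≤ 2*A := by
            rw [hBc, hA]; nlinarith [hCt]
          linarith)
      have hetat : 0 ≤ 2*(t-1)*A - Real.log t * Bc := by
        rw [hBc, hA]
        have hprod : 0 ≤ (t-1) * ((t+1)*Real.log t - 2*(t-1)) :=
          mul_nonneg (by linarith) (by linarith)
        nlinarith [hprod]
      linarith [h]
    -- Φ(s) = (s-1)^2*A - (s log s - s + 1)*Bc monotone on [t,m]
    have hPhi := mono_aux (f := fun s => (s-1)^2*A - (s*Real.log s - s + 1)*Bc)
        (f' := fun s => 2*(s-1)*A - Real.log s * Bc) htm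
      (fun x hx => by
        have hx0 : (0:ℝ) < x := lt_of_lt_of_le ht0' hx.1
        refine hasDerivAt_of_eq
          (((((hasDerivAt_id x).sub_const 1).pow 2).mul_const A).sub
            ((((Real.hasDerivAt_mul_log hx0.ne').sub (hasDerivAt_id x)).add_const 1).mul_const Bc)) ?_
        simp only [id_eq]
        ring)
      heta
    have hPhit : (t-1)^2*A - (t*Real.log t - t + 1)*Bc = 0 := by rw [hBc, hA]; ring
    nlinarith [hPhi, hPhit]

theorem stmt11 {α : Type*} [Fintype α] (m : ℝ) (hm : 1 < m)
    (P Q : α → ℝ) (hP : ∀ x, 0 ≤ P x) (hP1 : ∑ x, P x = 1)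
    (hQ : ∀ x, 0 < Q x) (hQ1 : ∑ x, Q x = 1)
    (hQm : ∀ x, 1 / m ≤ Q x) (hPQ : ∀ x, P x / Q x ≤ m) :
    ∑ x, (P x / Q x - 1) ^ 2 * Q x
      ≤ (m - 1) ^ 2 / (m * Real.log m - m + 1) * ∑ x, P x * Real.log (P x / Q x) := by
  have hKpos : 0 < m * Real.log m - m + 1 := fpos hm
  set K := m * Real.log m - m + 1 with hK
  have key' : ∀ x, (P x / Q x - 1)^2 * Q x
      ≤ (m-1)^2 / K * (P x * Real.log (P x / Q x) - P x + Q x) := by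
    intro x
    have hQx := hQ x
    have ht0 : 0 ≤ P x / Q x := div_nonneg (hP x) hQx.le
    have hkey := key m (P x / Q x) hm ht0 (hPQ x)
    have hPe : P x / Q x * Q x = P x := div_mul_cancel₀ _ hQx.ne'
    have hrw : P x * Real.log (P x / Q x) - P x + Q x
        = (P x / Q x * Real.log (P x / Q x) - P x / Q x + 1) * Q x := by
      have h2 : (P x / Q x * Real.log (P x / Q x) - P x / Q x + 1) * Q x
          = (P x / Q x * Q x) * Real.log (P x / Q x) - (P x / Q x * Q x) + Q x := by ring
      rw [h2, hPe]
    rw [hrw, div_mul_eq_mul_div, le_div_iff₀ hKpos]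
    nlinarith [mul_le_mul_of_nonneg_right hkey hQx.le]
  calc ∑ x, (P x / Q x - 1) ^ 2 * Q x
      ≤ ∑ x, (m-1)^2 / K * (P x * Real.log (P x / Q x) - P x + Q x) :=
        Finset.sum_le_sum (fun x _ => key' x)
    _ = (m-1)^2 / K * ∑ x, (P x * Real.log (P x / Q x) - P x + Q x) := by
        rw [Finset.mul_sum]
    _ = (m-1)^2 / K * ∑ x, P x * Real.log (P x / Q x) := by
        rw [Finset.sum_add_distrib, Finset.sum_sub_distrib, hP1, hQ1]
        ring
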